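/- Fix σ > 0 with σ·log(λM²) < 1/10. Then lim_{d→∞} P_{λ,d}( Σ_{m=0}^{⌊σ log d⌋} |V_m| > d^{0.2} ) = 0, where |V_m| denotes the cardinality of V_m. -/

import Mathlib

open MeasureTheory ProbabilityTheory Filter Set
open scoped ENNReal NNReal

noncomputable section

/-- On the oriented lattice `ℤ₊^d` (vertices `Fin d → ℕ`, oriented edges `x → x + e_j`),
the oriented edge from `x` to `y` is *open* (for the environment `ω`) iff `y = x + e_j` for
some `j` and the infection clock of the edge rings before the recovery clock of `x`.
Here `w x` is the random vertex weight `ρ(x)`, `Y x` is the rate-one exponential recovery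
clock of `x`, and `U x j` is a rate-one exponential clock so that
`U x j / ((λ/d) ρ(x) ρ(x + e_j))` is the exponential infection clock of rate
`(λ/d) ρ(x) ρ(x + e_j)` of the edge `(x, x + e_j)` (infinite when the rate vanishes); thus
the edge is open iff `U x j < (λ/d) ρ(x) ρ(y) Y x`. -/
def openEdge {Ω : Type} (lam : ℝ) (d : ℕ) (w Y : (Fin d → ℕ) → Ω → ℝ)
    (U : (Fin d → ℕ) → Fin d → Ω → ℝ) (ω : Ω) (x y : Fin d → ℕ) : Prop :=
  ∃ j : Fin d, y = Function.update x j (x j + 1) ∧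
    U x j ω < lam / d * (w x ω * w (Function.update x j (x j + 1)) ω) * Y x ω

/-- The sets `V_n` of vertices of `ℤ₊^d` with `ℓ¹`-norm `n` ever infected by the SIR model
started from the origin: `V₀ = {O}` and `V_{n+1}` is the set of endpoints of open oriented
edges starting in `V_n`. -/
def VSet {Ω : Type} (lam : ℝ) (d : ℕ) (w Y : (Fin d → ℕ) → Ω → ℝ)
    (U : (Fin d → ℕ) → Fin d → Ω → ℝ) (ω : Ω) : ℕ → Set (Fin d → ℕ)
  | 0 => {fun _ => 0}
  | n + 1 => {y | ∃ x ∈ VSet lam d w Y U ω n, openEdge lam d w Y U ω x y}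

/-- The random environment on `ℤ₊^d`: i.i.d. vertex weights with law `μ`, i.i.d. rate-one
exponential recovery clocks and i.i.d. rate-one exponential edge clocks, all jointly
independent; `P_{λ,d}` is the (annealed) probability measure `P`. -/
structure LatticeModel {Ω : Type} [MeasurableSpace Ω] (P : Measure Ω)
    (μ : Measure ℝ) (lam : ℝ) (d : ℕ) where
  hprob : IsProbabilityMeasure P
  w : (Fin d → ℕ) → Ω → ℝ
  Y : (Fin d → ℕ) → Ω → ℝ
  U : (Fin d → ℕ) → Fin d → Ω → ℝ
  hw : ∀ x, Measurable (w x)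
  hY : ∀ x, Measurable (Y x)
  hU : ∀ x j, Measurable (U x j)
  hwlaw : ∀ x, P.map (w x) = μ
  hYlaw : ∀ x, P.map (Y x) = expMeasure 1
  hUlaw : ∀ x j, P.map (U x j) = expMeasure 1
  hIndep : iIndepFun
    (m := fun _ : (Fin d → ℕ) ⊕ (Fin d → ℕ) ⊕ (Fin d → ℕ) × Fin d =>
      (inferInstance : MeasurableSpace ℝ))
    (Sum.elim w (Sum.elim Y (fun p => U p.1 p.2))) P

namespace SIRaux

/-! ### Paths on the lattice -/

def pos (d m : ℕ) (J : Fin m → Fin d) (t : ℕ) : Fin d → ℕ :=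
  fun k => ∑ i : Fin m, if i.val < t ∧ J i = k then 1 else 0

lemma pos_zero (d : ℕ) (J : Fin 0 → Fin d) (t : ℕ) : pos d 0 J t = fun _ => 0 := by
  funext k; simp [pos]

lemma pos_snoc_le (d m : ℕ) (J : Fin m → Fin d) (j : Fin d) {t : ℕ} (ht : t ≤ m) :
    pos d (m + 1) (Fin.snoc J j) t = pos d m J t := by
  funext k
  simp only [pos]
  rw [Fin.sum_univ_castSucc]
  simp [Fin.snoc_castSucc, Fin.snoc_last, Nat.not_lt.mpr ht]

lemma pos_snoc_top (d m : ℕ) (J : Fin m → Fin d) (j : Fin d) :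
    pos d (m + 1) (Fin.snoc J j) (m + 1)
      = Function.update (pos d m J m) j ((pos d m J m) j + 1) := by
  funext k
  rw [Function.update_apply]
  simp only [pos]
  rw [Fin.sum_univ_castSucc]
  simp only [Fin.snoc_castSucc, Fin.snoc_last, Fin.coe_castSucc, Fin.val_last]
  have h1 : ∀ i : Fin m, ((i.val < m + 1 ∧ J i = k) ↔ (i.val < m ∧ J i = k)) := by
    intro i; constructor
    · rintro ⟨-, h⟩; exact ⟨i.isLt, h⟩
    · rintro ⟨-, h⟩; exact ⟨Nat.lt_succ_of_lt i.isLt, h⟩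
  rw [Finset.sum_congr rfl (fun i _ => by rw [if_congr (h1 i) rfl rfl])]
  by_cases hk : k = j
  · subst hk; simp
  · simp [hk, Ne.symm hk]

lemma sum_pos (d m : ℕ) (J : Fin m → Fin d) (t : ℕ) :
    ∑ k, pos d m J t k = ∑ i : Fin m, if i.val < t then 1 else 0 := by
  simp only [pos]
  rw [Finset.sum_comm]
  refine Finset.sum_congr rfl fun i _ => ?_
  by_cases h : i.val < t
  · simp only [h, true_and]
    rw [Finset.sum_ite_eq Finset.univ (J i) (fun _ => 1)]
    simp
  · simp [h]

lemma pos_inj (d m : ℕ) (J : Fin m → Fin d) {i1 i2 : Fin m}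
    (h : pos d m J i1.val = pos d m J i2.val) : i1 = i2 := by
  have key : ∀ {t1 t2 : Fin m}, t1.val < t2.val →
      (∑ i : Fin m, if i.val < t1.val then 1 else 0)
        < (∑ i : Fin m, if i.val < t2.val then (1:ℕ) else 0) := by
    intro t1 t2 hlt
    refine Finset.sum_lt_sum (fun i _ => ?_) ⟨t1, Finset.mem_univ _, ?_⟩
    · by_cases h1 : i.val < t1.val
      · simp [h1, h1.trans hlt]
      · simp [h1]
    · simp [lt_irrefl, hlt]
  have hsum : (∑ i : Fin m, if i.val < i1.val then 1 else 0)
      = (∑ i : Fin m, if i.val < i2.val then (1:ℕ) else 0) := by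
    rw [← sum_pos d m J, ← sum_pos d m J, h]
  rcases lt_trichotomy i1.val i2.val with hl | he | hr
  · exact absurd hsum (key hl).ne
  · exact Fin.ext he
  · exact absurd hsum.symm (key hr).ne

/-! ### The crude events -/

def crude {Ω : Type} (lam M : ℝ) (d : ℕ) (Y : (Fin d → ℕ) → Ω → ℝ)
    (U : (Fin d → ℕ) → Fin d → Ω → ℝ) (m : ℕ) (J : Fin m → Fin d) : Set Ω :=
  ⋂ i : Fin m, {ω | U (pos d m J i.val) (J i) ω < lam / d * M ^ 2 * Y (pos d m J i.val) ω}

lemma VSet_subset_crude {Ω : Type} (lam M : ℝ) (hlam : 0 ≤ lam) (d : ℕ)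
    (w Y : (Fin d → ℕ) → Ω → ℝ) (U : (Fin d → ℕ) → Fin d → Ω → ℝ) (ω : Ω)
    (hG : ∀ x, 0 ≤ w x ω ∧ w x ω ≤ M ∧ 0 ≤ Y x ω) (m : ℕ) :
    VSet lam d w Y U ω m ⊆
      (fun J : Fin m → Fin d => pos d m J m) '' {J | ω ∈ crude lam M d Y U m J} := by
  induction m with
  | zero =>
    rintro y hy
    refine ⟨fun i => i.elim0, ?_, ?_⟩
    · simp only [Set.mem_setOf_eq, crude, Set.mem_iInter]
      exact fun i => i.elim0
    · show pos d 0 (fun i => i.elim0) 0 = y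
      rw [pos_zero]
      exact (Set.mem_singleton_iff.mp hy).symm
  | succ m ih =>
    rintro y ⟨x, hx, j, hyx, hUlt⟩
    obtain ⟨J, hJ, hxJ⟩ := ih hx
    refine ⟨Fin.snoc J j, ?_, ?_⟩
    · simp only [Set.mem_setOf_eq, crude, Set.mem_iInter]
      intro i
      induction i using Fin.lastCases with
      | last =>
        have hpos : pos d (m + 1) (Fin.snoc J j) (Fin.last m).val = x := by
          simp only [Fin.val_last]
          rw [pos_snoc_le d m J j le_rfl]; exact hxJ
        simp only [Set.mem_setOf_eq, hpos, Fin.snoc_last]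
        have hld : 0 ≤ lam / d := div_nonneg hlam (Nat.cast_nonneg d)
        have hww : w x ω * w (Function.update x j (x j + 1)) ω ≤ M ^ 2 := by
          have h1 := hG x
          have h2 := hG (Function.update x j (x j + 1))
          calc w x ω * w (Function.update x j (x j + 1)) ω ≤ M * M :=
                mul_le_mul h1.2.1 h2.2.1 h2.1 (h1.1.trans h1.2.1)
            _ = M ^ 2 := (sq M).symm
        refine lt_of_lt_of_le hUlt ?_
        exact mul_le_mul_of_nonneg_right
          (mul_le_mul_of_nonneg_left hww hld) (hG x).2.2
      | cast i =>
        have hpos : pos d (m + 1) (Fin.snoc J j) (Fin.castSucc i).val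
            = pos d m J i.val := by
          simp only [Fin.coe_castSucc]
          exact pos_snoc_le d m J j i.isLt.le
        simp only [Set.mem_setOf_eq, hpos, Fin.snoc_castSucc]
        exact Set.mem_iInter.mp hJ i
    · show pos d (m + 1) (Fin.snoc J j) (m + 1) = y
      rw [pos_snoc_top d m J j]
      rw [show pos d m J m = x from hxJ, ← hyx]

/-! ### Independence -/

lemma meas_iInter_lt_eq_prod {Ω' ι : Type*} [MeasurableSpace Ω'] {P : Measure Ω'}
    {f : ι → Ω' → ℝ} (hf : ∀ i, Measurable (f i))
    (hIndep : iIndepFun (m := fun _ => (inferInstance : MeasurableSpace ℝ)) f P)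
    (c : ℝ) :
    ∀ (m : ℕ) (a b : Fin m → ι), Function.Injective a → Function.Injective b →
      (∀ i j, a i ≠ b j) →
      P (⋂ i, {ω | f (a i) ω < c * f (b i) ω})
        = ∏ i, P {ω | f (a i) ω < c * f (b i) ω} := by
  classical
  intro m
  induction m with
  | zero =>
    intro a b _ _ _
    haveI := hIndep.isProbabilityMeasure
    simp [Set.iInter_of_empty]
  | succ m ih =>
    intro a b ha hb hab
    set S : Finset ι :=
      (Finset.univ.image fun i : Fin m => a i.castSucc)
        ∪ (Finset.univ.image fun i : Fin m => b i.castSucc) with hS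
    set T : Finset ι := {a (Fin.last m), b (Fin.last m)} with hT
    have hcs_ne_last : ∀ i : Fin m, (Fin.castSucc i) ≠ Fin.last m :=
      fun i => (Fin.castSucc_lt_last i).ne
    have hST : Disjoint S T := by
      rw [Finset.disjoint_left]
      intro x hxS hxT
      simp only [hS, Finset.mem_union, Finset.mem_image, Finset.mem_univ, true_and] at hxS
      simp only [hT, Finset.mem_insert, Finset.mem_singleton] at hxT
      rcases hxS with ⟨i, rfl⟩ | ⟨i, rfl⟩ <;> rcases hxT with h | h
      · exact hcs_ne_last i (ha h)
      · exact hab _ _ h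
      · exact hab _ _ h.symm
      · exact hcs_ne_last i (hb h)
    have hIST := hIndep.indepFun_finset S T hST hf
    have hmaS : ∀ i : Fin m, a i.castSucc ∈ S := by
      intro i
      simp only [hS, Finset.mem_union, Finset.mem_image, Finset.mem_univ, true_and]
      exact Or.inl ⟨i, rfl⟩
    have hmbS : ∀ i : Fin m, b i.castSucc ∈ S := by
      intro i
      simp only [hS, Finset.mem_union, Finset.mem_image, Finset.mem_univ, true_and]
      exact Or.inr ⟨i, rfl⟩
    have hmaT : a (Fin.last m) ∈ T := by simp [hT]
    have hmbT : b (Fin.last m) ∈ T := by simp [hT]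
    set CS : Set ((i : S) → ℝ) :=
      ⋂ i : Fin m, {v | v ⟨a i.castSucc, hmaS i⟩ < c * v ⟨b i.castSucc, hmbS i⟩} with hCS
    set CT : Set ((i : T) → ℝ) :=
      {v | v ⟨a (Fin.last m), hmaT⟩ < c * v ⟨b (Fin.last m), hmbT⟩} with hCT
    have hCSm : MeasurableSet CS :=
      MeasurableSet.iInter fun i =>
        measurableSet_lt (by fun_prop) (by fun_prop)
    have hCTm : MeasurableSet CT :=
      measurableSet_lt (by fun_prop) (by fun_prop)
    have hpre1 : (fun ω (i : S) => f i ω) ⁻¹' CS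
        = ⋂ i : Fin m, {ω | f (a i.castSucc) ω < c * f (b i.castSucc) ω} := by
      ext ω; simp [hCS, Set.mem_iInter]
    have hpre2 : (fun ω (i : T) => f i ω) ⁻¹' CT
        = {ω | f (a (Fin.last m)) ω < c * f (b (Fin.last m)) ω} := by
      ext ω; simp [hCT]
    have hsplit : (⋂ i : Fin (m+1), {ω | f (a i) ω < c * f (b i) ω})
        = ((fun ω (i : S) => f i ω) ⁻¹' CS) ∩ ((fun ω (i : T) => f i ω) ⁻¹' CT) := by
      rw [hpre1, hpre2]
      ext ω
      simp only [Set.mem_iInter, Set.mem_inter_iff, Set.mem_setOf_eq]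
      constructor
      · exact fun h => ⟨fun i => h _, h _⟩
      · rintro ⟨h1, h2⟩ i
        induction i using Fin.lastCases with
        | last => exact h2
        | cast i => exact h1 i
    rw [hsplit, hIST.measure_inter_preimage_eq_mul _ _ hCSm hCTm, hpre1, hpre2]
    have := ih (fun i => a i.castSucc) (fun i => b i.castSucc)
      (ha.comp (Fin.castSucc_injective m)) (hb.comp (Fin.castSucc_injective m))
      (fun i j => hab _ _)
    rw [this, Fin.prod_univ_castSucc]

/-! ### Exponential estimates -/

lemma expMeasure_Iic_le (t : ℝ) : expMeasure 1 (Iic t) ≤ ENNReal.ofReal t := by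
  haveI : IsProbabilityMeasure (expMeasure 1) := isProbabilityMeasure_expMeasure one_pos
  have h1 : expMeasure 1 (Iic t) = ENNReal.ofReal (cdf (expMeasure 1) t) := by
    rw [cdf_eq_real, measureReal_def, ENNReal.ofReal_toReal (measure_ne_top _ _)]
  rw [h1, cdf_expMeasure_eq one_pos]
  by_cases h : 0 ≤ t
  · simp only [h, if_true]
    refine ENNReal.ofReal_le_ofReal ?_
    have := Real.add_one_le_exp (-(1 * t))
    linarith
  · simp [h]

lemma expMeasure_Iio_le (t : ℝ) : expMeasure 1 (Iio t) ≤ ENNReal.ofReal t :=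
  le_trans (measure_mono Iio_subset_Iic_self) (expMeasure_Iic_le t)

lemma expMeasure_moment : ∫⁻ y, ENNReal.ofReal y ∂(expMeasure 1) = 1 := by
  have hme : expMeasure 1 = volume.withDensity (exponentialPDF 1) := rfl
  rw [hme, lintegral_withDensity_eq_lintegral_mul _
    ((by exact (measurable_exponentialPDFReal 1).ennreal_ofReal : Measurable (exponentialPDF 1)))
    ENNReal.measurable_ofReal]
  have heq : ∀ y : ℝ, (exponentialPDF 1 * ENNReal.ofReal) y
      = (Ioi (0:ℝ)).indicator (fun y => ENNReal.ofReal (Real.exp (-y) * y ^ ((2:ℝ) - 1))) y := by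
    intro y
    simp only [Pi.mul_apply]
    rcases lt_trichotomy y 0 with h | h | h
    · rw [Set.indicator_of_notMem (by simp [h.not_gt]), exponentialPDF_of_neg h]
      simp
    · subst h
      rw [Set.indicator_of_notMem (by simp)]
      simp
    · rw [Set.indicator_of_mem (Set.mem_Ioi.mpr h), exponentialPDF_of_nonneg h.le,
        ← ENNReal.ofReal_mul (by positivity)]
      congr 1
      rw [show ((2:ℝ) - 1) = 1 by norm_num, Real.rpow_one]
      ring_nf
  rw [lintegral_congr heq, lintegral_indicator measurableSet_Ioi _]
  rw [← MeasureTheory.ofReal_integral_eq_lintegral_ofReal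
    (Real.GammaIntegral_convergent (by norm_num : (0:ℝ) < 2))
    ((ae_restrict_iff' measurableSet_Ioi).mpr (Filter.Eventually.of_forall fun x hx => by
      have hx' : (0:ℝ) < x := hx
      positivity))]
  rw [← Real.Gamma_eq_integral (by norm_num : (0:ℝ) < 2)]
  rw [show (2:ℝ) = (1:ℕ) + 1 by norm_num, Real.Gamma_nat_eq_factorial]
  simp

lemma prob_lt_mul_le {Ω' : Type*} [MeasurableSpace Ω'] {P : Measure Ω'}
    [IsProbabilityMeasure P] {X Y : Ω' → ℝ} (hX : Measurable X) (hY : Measurable Y)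
    (hXY : IndepFun X Y P) (hXlaw : P.map X = expMeasure 1) (hYlaw : P.map Y = expMeasure 1)
    {c : ℝ} (hc : 0 ≤ c) :
    P {ω | X ω < c * Y ω} ≤ ENNReal.ofReal c := by
  haveI : IsProbabilityMeasure (expMeasure 1) := isProbabilityMeasure_expMeasure one_pos
  have hsm : MeasurableSet {p : ℝ × ℝ | p.1 < c * p.2} :=
    measurableSet_lt measurable_fst (measurable_snd.const_mul c)
  have h1 : {ω | X ω < c * Y ω} = (fun ω => (X ω, Y ω)) ⁻¹' {p : ℝ × ℝ | p.1 < c * p.2} := rfl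
  rw [h1, ← Measure.map_apply (hX.prodMk hY) hsm]
  rw [(indepFun_iff_map_prod_eq_prod_map_map hX.aemeasurable hY.aemeasurable).mp hXY,
    hXlaw, hYlaw, Measure.prod_apply_symm hsm]
  have hslice : ∀ y : ℝ, ((fun x => (x, y)) ⁻¹' {p : ℝ × ℝ | p.1 < c * p.2}) = Iio (c * y) := by
    intro y; rfl
  calc ∫⁻ y, expMeasure 1 ((fun x => (x, y)) ⁻¹' {p : ℝ × ℝ | p.1 < c * p.2}) ∂(expMeasure 1)
      ≤ ∫⁻ y, ENNReal.ofReal c * ENNReal.ofReal y ∂(expMeasure 1) := by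
        refine lintegral_mono fun y => ?_
        rw [hslice y, ← ENNReal.ofReal_mul hc]
        exact expMeasure_Iio_le _
    _ = ENNReal.ofReal c := by
        rw [lintegral_const_mul _ ENNReal.measurable_ofReal, expMeasure_moment, mul_one]

lemma main_estimate {Ω : Type} [MeasurableSpace Ω] {P : Measure Ω} {μ : Measure ℝ}
    [IsProbabilityMeasure μ] (M lam : ℝ) (hM : 0 < M) (hlam : 0 < lam)
    (hμM : μ (Set.Icc (0 : ℝ) M) = 1)
    {d : ℕ} (hd : 1 ≤ d) (L : LatticeModel P μ lam d) (N : ℕ) {a : ℝ} (ha : 0 < a) :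
    P {ω | a < ∑ m ∈ Finset.range (N + 1), ((VSet lam d L.w L.Y L.U ω m).ncard : ℝ)}
      ≤ ENNReal.ofReal ((∑ m ∈ Finset.range (N + 1), (lam * M ^ 2) ^ m) / a) := by
  classical
  haveI := L.hprob
  have hd0 : (0:ℝ) < d := by exact_mod_cast hd
  set q : ℝ := lam * M ^ 2 with hqdef
  set c : ℝ := lam / d * M ^ 2 with hcdef
  have hc0 : 0 ≤ c := by positivity
  set F : ((Fin d → ℕ) ⊕ (Fin d → ℕ) ⊕ (Fin d → ℕ) × Fin d) → Ω → ℝ :=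
    Sum.elim L.w (Sum.elim L.Y (fun p => L.U p.1 p.2)) with hF
  have hInd : iIndepFun (m := fun _ => (inferInstance : MeasurableSpace ℝ)) F P := by
    rw [hF]; exact L.hIndep
  have hFm : ∀ i, Measurable (F i) := by
    rintro (x | x | p)
    · exact L.hw x
    · exact L.hY x
    · exact L.hU p.1 p.2
  -- measurability of crude events
  have hcrude_meas : ∀ m (J : Fin m → Fin d), MeasurableSet (crude lam M d L.Y L.U m J) :=
    fun m J => MeasurableSet.iInter fun i =>
      measurableSet_lt (L.hU _ _) ((L.hY _).const_mul _)
  -- probability of a crude event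
  have hPE : ∀ m (J : Fin m → Fin d),
      P (crude lam M d L.Y L.U m J) ≤ ENNReal.ofReal (c ^ m) := by
    intro m J
    set aI : Fin m → ((Fin d → ℕ) ⊕ (Fin d → ℕ) ⊕ (Fin d → ℕ) × Fin d) :=
      fun i => Sum.inr (Sum.inr (pos d m J i.val, J i)) with haI
    set bI : Fin m → ((Fin d → ℕ) ⊕ (Fin d → ℕ) ⊕ (Fin d → ℕ) × Fin d) :=
      fun i => Sum.inr (Sum.inl (pos d m J i.val)) with hbI
    have hainj : Function.Injective aI := by
      intro i1 i2 h
      simp only [haI, Sum.inr.injEq, Prod.mk.injEq] at h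
      exact pos_inj d m J h.1
    have hbinj : Function.Injective bI := by
      intro i1 i2 h
      simp only [hbI, Sum.inr.injEq, Sum.inl.injEq] at h
      exact pos_inj d m J h
    have hab : ∀ i j, aI i ≠ bI j := by
      intro i j h
      simp [haI, hbI] at h
    have key := meas_iInter_lt_eq_prod hFm hInd c m aI bI hainj hbinj hab
    have hEeq : crude lam M d L.Y L.U m J
        = ⋂ i, {ω | F (aI i) ω < c * F (bI i) ω} := rfl
    rw [hEeq, key]
    have hone : ∀ i : Fin m, P {ω | F (aI i) ω < c * F (bI i) ω} ≤ ENNReal.ofReal c := by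
      intro i
      exact prob_lt_mul_le (L.hU _ _) (L.hY _)
        (hInd.indepFun (hab i i)) (L.hUlaw _ _) (L.hYlaw _) hc0
    calc (∏ i : Fin m, P {ω | F (aI i) ω < c * F (bI i) ω})
        ≤ ∏ _i : Fin m, ENNReal.ofReal c := Finset.prod_le_prod' fun i _ => hone i
      _ = ENNReal.ofReal c ^ m := by simp
      _ = ENNReal.ofReal (c ^ m) := (ENNReal.ofReal_pow hc0 m).symm
  -- the good event
  set G : Set Ω := {ω | ∀ x, 0 ≤ L.w x ω ∧ L.w x ω ≤ M ∧ 0 ≤ L.Y x ω} with hGdef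
  have hGc : P Gᶜ = 0 := by
    have hGceq : Gᶜ = ⋃ x : Fin d → ℕ,
        {ω | ¬(0 ≤ L.w x ω ∧ L.w x ω ≤ M ∧ 0 ≤ L.Y x ω)} := by
      ext ω; simp [hGdef, not_forall]
    rw [hGceq]
    refine measure_iUnion_null fun x => ?_
    have hsub : {ω | ¬(0 ≤ L.w x ω ∧ L.w x ω ≤ M ∧ 0 ≤ L.Y x ω)}
        ⊆ (L.w x ⁻¹' (Set.Icc 0 M)ᶜ) ∪ (L.Y x ⁻¹' Set.Iio 0) := by
      intro ω h
      by_cases hw : L.w x ω ∈ Set.Icc 0 M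
      · right
        simp only [Set.mem_preimage, Set.mem_Iio]
        by_contra hY
        exact h ⟨hw.1, hw.2, not_lt.mp hY⟩
      · exact Or.inl hw
    refine measure_mono_null hsub (measure_union_null ?_ ?_)
    · rw [← Measure.map_apply (L.hw x) measurableSet_Icc.compl, L.hwlaw x,
        measure_compl measurableSet_Icc (measure_ne_top μ _), hμM, measure_univ, tsub_self]
    · rw [← Measure.map_apply (L.hY x) measurableSet_Iio, L.hYlaw x]
      refine le_antisymm ?_ zero_le
      simpa using expMeasure_Iio_le 0
  -- counting
  have hcount : ∀ ω ∈ G, ∀ m : ℕ,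
      ((VSet lam d L.w L.Y L.U ω m).ncard : ℝ)
        ≤ ∑ J : Fin m → Fin d, (if ω ∈ crude lam M d L.Y L.U m J then (1:ℝ) else 0) := by
    intro ω hω m
    have hsub := VSet_subset_crude lam M hlam.le d L.w L.Y L.U ω hω m
    have h1 : (VSet lam d L.w L.Y L.U ω m).ncard
        ≤ ({J : Fin m → Fin d | ω ∈ crude lam M d L.Y L.U m J}).ncard :=
      le_trans (Set.ncard_le_ncard hsub (Set.toFinite _)) (Set.ncard_image_le (Set.toFinite _))
    have h2 : ({J : Fin m → Fin d | ω ∈ crude lam M d L.Y L.U m J}).ncard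
        = ∑ J : Fin m → Fin d, (if ω ∈ crude lam M d L.Y L.U m J then (1:ℕ) else 0) := by
      rw [Set.ncard_eq_toFinset_card' , Set.toFinset_setOf, Finset.card_filter]
    calc ((VSet lam d L.w L.Y L.U ω m).ncard : ℝ)
        ≤ (({J : Fin m → Fin d | ω ∈ crude lam M d L.Y L.U m J}).ncard : ℝ) := by
          exact_mod_cast h1
      _ = ∑ J : Fin m → Fin d, (if ω ∈ crude lam M d L.Y L.U m J then (1:ℝ) else 0) := by
          rw [h2]; push_cast [apply_ite]; rfl
  -- the master function
  set f : Ω → ℝ≥0∞ := fun ω => ∑ m ∈ Finset.range (N + 1), ∑ J : Fin m → Fin d,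
    (crude lam M d L.Y L.U m J).indicator (1 : Ω → ℝ≥0∞) ω with hfdef
  have hfmeas : Measurable f :=
    Finset.measurable_sum _ fun m _ => Finset.measurable_sum _ fun J _ =>
      measurable_one.indicator (hcrude_meas m J)
  have hlint : ∫⁻ ω, f ω ∂P ≤ ENNReal.ofReal (∑ m ∈ Finset.range (N + 1), q ^ m) := by
    rw [hfdef]
    rw [lintegral_finset_sum _ (fun m _ => Finset.measurable_sum _ fun J _ =>
      measurable_one.indicator (hcrude_meas m J))]
    have hinner : ∀ m ∈ Finset.range (N + 1),
        (∫⁻ ω, ∑ J : Fin m → Fin d,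
          (crude lam M d L.Y L.U m J).indicator (1 : Ω → ℝ≥0∞) ω ∂P)
          ≤ ENNReal.ofReal (q ^ m) := by
      intro m _
      rw [lintegral_finset_sum _ (fun J _ => measurable_one.indicator (hcrude_meas m J))]
      have : ∀ J : Fin m → Fin d,
          (∫⁻ ω, (crude lam M d L.Y L.U m J).indicator (1 : Ω → ℝ≥0∞) ω ∂P)
            ≤ ENNReal.ofReal (c ^ m) := by
        intro J
        rw [lintegral_indicator_one (hcrude_meas m J)]
        exact hPE m J
      calc (∑ J : Fin m → Fin d,
            ∫⁻ ω, (crude lam M d L.Y L.U m J).indicator (1 : Ω → ℝ≥0∞) ω ∂P)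
          ≤ ∑ _J : Fin m → Fin d, ENNReal.ofReal (c ^ m) :=
            Finset.sum_le_sum fun J _ => this J
        _ = (Fintype.card (Fin m → Fin d) : ℝ≥0∞) * ENNReal.ofReal (c ^ m) := by
            rw [Finset.sum_const, Finset.card_univ, nsmul_eq_mul]
        _ = ENNReal.ofReal (q ^ m) := by
            rw [show (Fintype.card (Fin m → Fin d)) = d ^ m by
              simp [Fintype.card_fun]]
            rw [show ((d ^ m : ℕ) : ℝ≥0∞) = ENNReal.ofReal ((d:ℝ) ^ m) by
              rw [← ENNReal.ofReal_natCast]; push_cast; ring_nf]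
            rw [← ENNReal.ofReal_mul (by positivity), ← mul_pow]
            have hdc : (d:ℝ) * c = q := by rw [hcdef, hqdef]; field_simp
            rw [hdc]
    calc (∑ m ∈ Finset.range (N + 1), ∫⁻ ω, ∑ J : Fin m → Fin d,
          (crude lam M d L.Y L.U m J).indicator (1 : Ω → ℝ≥0∞) ω ∂P)
        ≤ ∑ m ∈ Finset.range (N + 1), ENNReal.ofReal (q ^ m) :=
          Finset.sum_le_sum hinner
      _ = ENNReal.ofReal (∑ m ∈ Finset.range (N + 1), q ^ m) :=
          (ENNReal.ofReal_sum_of_nonneg fun m _ => by positivity).symm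
  -- inclusion into the Chebyshev event
  have hsub : {ω | a < ∑ m ∈ Finset.range (N + 1),
        ((VSet lam d L.w L.Y L.U ω m).ncard : ℝ)}
      ⊆ Gᶜ ∪ {ω | ENNReal.ofReal a ≤ f ω} := by
    intro ω hω
    by_cases hG : ω ∈ G
    · right
      have hlt : a < ∑ m ∈ Finset.range (N + 1), ∑ J : Fin m → Fin d,
          (if ω ∈ crude lam M d L.Y L.U m J then (1:ℝ) else 0) :=
        lt_of_lt_of_le hω (Finset.sum_le_sum fun m _ => hcount ω hG m)
      have hre : ENNReal.ofReal (∑ m ∈ Finset.range (N + 1), ∑ J : Fin m → Fin d,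
          (if ω ∈ crude lam M d L.Y L.U m J then (1:ℝ) else 0)) = f ω := by
        rw [ENNReal.ofReal_sum_of_nonneg (fun m _ => by positivity)]
        refine Finset.sum_congr rfl fun m _ => ?_
        rw [ENNReal.ofReal_sum_of_nonneg (fun J _ => by positivity)]
        refine Finset.sum_congr rfl fun J _ => ?_
        by_cases h : ω ∈ crude lam M d L.Y L.U m J <;> simp [h, Set.indicator]
      show ENNReal.ofReal a ≤ f ω
      calc ENNReal.ofReal a ≤ ENNReal.ofReal (∑ m ∈ Finset.range (N + 1),
            ∑ J : Fin m → Fin d, (if ω ∈ crude lam M d L.Y L.U m J then (1:ℝ) else 0)) :=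
            ENNReal.ofReal_le_ofReal hlt.le
        _ = f ω := hre
    · exact Or.inl hG
  -- Chebyshev
  have hcheb : P {ω | ENNReal.ofReal a ≤ f ω}
      ≤ ENNReal.ofReal ((∑ m ∈ Finset.range (N + 1), q ^ m) / a) := by
    have h1 := mul_meas_ge_le_lintegral₀ (μ := P) hfmeas.aemeasurable (ENNReal.ofReal a)
    have ha0 : ENNReal.ofReal a ≠ 0 := (ENNReal.ofReal_pos.mpr ha).ne'
    have h2 : P {ω | ENNReal.ofReal a ≤ f ω} ≤ (∫⁻ ω, f ω ∂P) / ENNReal.ofReal a :=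
      (ENNReal.le_div_iff_mul_le (Or.inl ha0) (Or.inl ENNReal.ofReal_ne_top)).mpr
        (by rwa [mul_comm] at h1)
    refine h2.trans ?_
    rw [ENNReal.ofReal_div_of_pos ha]
    exact ENNReal.div_le_div_right hlint _
  calc P {ω | a < ∑ m ∈ Finset.range (N + 1), ((VSet lam d L.w L.Y L.U ω m).ncard : ℝ)}
      ≤ P (Gᶜ ∪ {ω | ENNReal.ofReal a ≤ f ω}) := measure_mono hsub
    _ ≤ P Gᶜ + P {ω | ENNReal.ofReal a ≤ f ω} := measure_union_le _ _
    _ = P {ω | ENNReal.ofReal a ≤ f ω} := by rw [hGc, zero_add]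
    _ ≤ ENNReal.ofReal ((∑ m ∈ Finset.range (N + 1), q ^ m) / a) := hcheb

end SIRaux


/-- Fix `σ > 0` with `σ·log(λM²) < 1/10`.  Then
`lim_{d→∞} P_{λ,d}(Σ_{m=0}^{⌊σ log d⌋} |V_m| > d^{0.2}) = 0`, where `|V_m|` denotes the
cardinality of `V_m`. -/
theorem sum_card_V_small (M : ℝ) (hM : 0 < M)
    (μ : Measure ℝ) [IsProbabilityMeasure μ]
    (hμM : μ (Set.Icc (0 : ℝ) M) = 1) (hμpos : 0 < μ (Set.Ioi (0 : ℝ)))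
    (lam : ℝ) (hlam : 0 < lam)
    (σ : ℝ) (hσ : 0 < σ) (hσ' : σ * Real.log (lam * M ^ 2) < 1 / 10)
    (Ω : ℕ → Type) (mΩ : ∀ d, MeasurableSpace (Ω d))
    (P : ∀ d, @Measure (Ω d) (mΩ d))
    (L : ∀ d, LatticeModel (P d) μ lam d) :
    Tendsto (fun d : ℕ =>
        ((P d) {ω | (d : ℝ) ^ (0.2 : ℝ) <
          ∑ m ∈ Finset.range (⌊σ * Real.log (d : ℝ)⌋₊ + 1),
            ((VSet lam d (L d).w (L d).Y (L d).U ω m).ncard : ℝ)}).toReal)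
      atTop (nhds 0) := by
  set q : ℝ := lam * M ^ 2 with hq
  have hq0 : 0 < q := by positivity
  set K : ℝ := max 1 q with hK
  have hK1 : (1:ℝ) ≤ K := le_max_left _ _
  have hK0 : (0:ℝ) < K := lt_of_lt_of_le one_pos hK1
  set β : ℝ := σ * Real.log K with hβdef
  have hβ : β < 1/10 := by
    rcases le_or_gt q 1 with h | h
    · rw [hβdef, hK, max_eq_left h, Real.log_one, mul_zero]; norm_num
    · rw [hβdef, hK, max_eq_right h.le]; exact hσ'
  set ε : ℝ := 0.2 - β with hεdef
  have hε : 0 < ε := by rw [hεdef]; norm_num; linarith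
  have hC : Tendsto (fun x : ℝ => (σ * Real.log x + 2) * x ^ (β - 0.2)) atTop (nhds 0) := by
    have hlog : Tendsto (fun x : ℝ => Real.log x / x ^ ε) atTop (nhds 0) :=
      (isLittleO_log_rpow_atTop hε).tendsto_div_nhds_zero
    have h2 : Tendsto (fun x : ℝ => x ^ (-ε)) atTop (nhds 0) := tendsto_rpow_neg_atTop hε
    have hcomb := (hlog.const_mul σ).add (h2.const_mul 2)
    rw [mul_zero, mul_zero, add_zero] at hcomb
    refine hcomb.congr' ?_
    filter_upwards [eventually_ge_atTop (1:ℝ)] with x hx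
    have hx0 : (0:ℝ) < x := lt_of_lt_of_le one_pos hx
    have h3 : x ^ (β - 0.2) = x ^ (-ε) := by rw [hεdef]; ring_nf
    have h4 : x ^ (-ε) = (x ^ ε)⁻¹ := Real.rpow_neg hx0.le ε
    rw [h3, h4, div_eq_mul_inv]
    ring
  have hCn : Tendsto (fun d : ℕ => (σ * Real.log d + 2) * (d:ℝ) ^ (β - 0.2)) atTop (nhds 0) :=
    hC.comp tendsto_natCast_atTop_atTop
  refine tendsto_of_tendsto_of_tendsto_of_le_of_le' tendsto_const_nhds hCn
    (Eventually.of_forall fun d => ENNReal.toReal_nonneg) ?_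
  filter_upwards [eventually_ge_atTop 1] with d hd
  have hd0 : (0:ℝ) < d := by exact_mod_cast hd
  set N := ⌊σ * Real.log (d:ℝ)⌋₊ with hN
  set a : ℝ := (d:ℝ) ^ (0.2:ℝ) with hadef
  have ha : 0 < a := Real.rpow_pos_of_pos hd0 _
  have hest := SIRaux.main_estimate M lam hM hlam hμM hd (L d) N ha
  have h1 : ((P d) {ω | a <
      ∑ m ∈ Finset.range (N + 1),
        ((VSet lam d (L d).w (L d).Y (L d).U ω m).ncard : ℝ)}).toReal
      ≤ (∑ m ∈ Finset.range (N + 1), q ^ m) / a := by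
    have h2 := ENNReal.toReal_mono ENNReal.ofReal_ne_top hest
    rwa [ENNReal.toReal_ofReal (by positivity)] at h2
  refine h1.trans ?_
  have hlogd : 0 ≤ Real.log d := Real.log_nonneg (by exact_mod_cast hd)
  have hσl : 0 ≤ σ * Real.log d := mul_nonneg hσ.le hlogd
  have hNle : (N:ℝ) ≤ σ * Real.log d := Nat.floor_le hσl
  have hsum : (∑ m ∈ Finset.range (N + 1), q ^ m) ≤ ((N:ℝ) + 1) * K ^ N := by
    calc (∑ m ∈ Finset.range (N + 1), q ^ m)
        ≤ ∑ _m ∈ Finset.range (N + 1), K ^ N :=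
          Finset.sum_le_sum fun m hm =>
            (pow_le_pow_left₀ hq0.le (le_max_right 1 q) m).trans
              (pow_le_pow_right₀ hK1 (Nat.lt_succ_iff.mp (Finset.mem_range.mp hm)))
      _ = ((N:ℝ) + 1) * K ^ N := by
          rw [Finset.sum_const, Finset.card_range, nsmul_eq_mul]
          push_cast; ring
  have hKN : (K:ℝ) ^ N ≤ (d:ℝ) ^ β := by
    rw [(Real.rpow_natCast K N).symm]
    calc K ^ (N:ℝ) ≤ K ^ (σ * Real.log d) := Real.rpow_le_rpow_of_exponent_le hK1 hNle
      _ = (d:ℝ) ^ β := by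
          rw [Real.rpow_def_of_pos hK0, Real.rpow_def_of_pos hd0, hβdef]
          ring_nf
  have hKNn : (0:ℝ) ≤ K ^ N := by positivity
  calc (∑ m ∈ Finset.range (N + 1), q ^ m) / a
      ≤ ((σ * Real.log d + 2) * ((d:ℝ) ^ β)) / a := by
        apply (div_le_div_iff_of_pos_right ha).mpr
        refine le_trans hsum ?_
        apply mul_le_mul _ hKN hKNn (by linarith)
        linarith
    _ = (σ * Real.log d + 2) * (d:ℝ) ^ (β - 0.2) := by
        rw [Real.rpow_sub hd0, hadef]
        ring
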